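/- Let $G$ be a finitely generated group (with a fixed word metric $d$) in which the centralizer of any infinite-order element is cyclic, and let $g \in G$ be a primitive element of infinite order (i.e., $C_G(g) = \langle g \rangle$). If $h \in G$ satisfies $\sup_{n \in \mathbb{N}} d(g^n, h g^n) < \infty$, then $h = g^t$ for some integer $t$. -/

import Mathlib

/-- Word length of `g` with respect to a generating set `S`. -/
noncomputable def wordLength {G : Type*} [Group G] (S : Set G) (g : G) : ℕ :=
  sInf {n : ℕ | ∃ f : Fin n → G, (∀ i, f i ∈ S) ∧ (List.ofFn f).prod = g}

/-- Let `G` be a finitely generated group (with word metric for a finite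
symmetric generating set `S`) in which the centralizer of any infinite-order element is
cyclic, and let `g` be a primitive element of infinite order. If
`sup_n d(g ^ n, h * g ^ n) < ∞` then `h = g ^ t` for some integer `t`. -/
theorem eq_power_of_bounded_distance {G : Type*} [Group G]
    (S : Set G) (hSfin : S.Finite) (hSsym : ∀ s ∈ S, s⁻¹ ∈ S)
    (hSgen : Subgroup.closure S = ⊤)
    (hCIC : ∀ g : G, ¬ IsOfFinOrder g → IsCyclic ↥(Subgroup.centralizer {g}))
    (g : G) (hg : ¬ IsOfFinOrder g)
    (hprim : Subgroup.centralizer {g} = Subgroup.zpowers g)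
    (h : G) (C : ℕ)
    (hbd : ∀ n : ℕ, wordLength S ((g ^ n)⁻¹ * (h * g ^ n)) ≤ C) :
    ∃ t : ℤ, h = g ^ t := by
  classical
  -- every element is a product of elements of S
  have hrep : ∀ x : G, ∃ l : List G, (∀ y ∈ l, y ∈ S) ∧ l.prod = x := by
    intro x
    have hx : x ∈ Subgroup.closure S := by rw [hSgen]; trivial
    rw [← Subgroup.mem_toSubmonoid, Subgroup.closure_toSubmonoid] at hx
    obtain ⟨l, hl, hprod⟩ := Submonoid.exists_list_of_mem_closure hx
    refine ⟨l, fun y hy => ?_, hprod⟩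
    rcases hl y hy with h' | h'
    · exact h'
    · simpa using hSsym _ h'
  -- realize the word length
  have hword : ∀ x : G, ∃ l : List G, (∀ y ∈ l, y ∈ S) ∧ l.length = wordLength S x ∧
      l.prod = x := by
    intro x
    obtain ⟨l, hl, hprod⟩ := hrep x
    have hne : {n : ℕ | ∃ f : Fin n → G, (∀ i, f i ∈ S) ∧ (List.ofFn f).prod = x}.Nonempty :=
      ⟨l.length, l.get, fun i => hl _ (l.get_mem _), by simp [hprod]⟩
    obtain ⟨f, hf, hfp⟩ := Nat.sInf_mem hne
    refine ⟨List.ofFn f, ?_, by simp [wordLength], hfp⟩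
    intro y hy
    obtain ⟨i, rfl⟩ := List.mem_ofFn.mp hy
    exact hf i
  set T : Set G := insert 1 S with hT
  have hTfin : T.Finite := hSfin.insert 1
  have hAfin : {x : G | ∃ l : List G, (∀ y ∈ l, y ∈ T) ∧ l.length = C ∧ l.prod = x}.Finite := by
    haveI : Finite ↥T := hTfin.to_subtype
    have hsub : {x : G | ∃ l : List G, (∀ y ∈ l, y ∈ T) ∧ l.length = C ∧ l.prod = x} ⊆
        Set.range (fun f : Fin C → ↥T => (List.ofFn fun i => ((f i : G))).prod) := by
      rintro x ⟨l, hl, hlen, hprod⟩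
      subst hlen
      exact ⟨fun i => ⟨l.get i, hl _ (l.get_mem _)⟩, by simp [List.ofFn_get, hprod]⟩
    exact (Set.finite_range _).subset hsub
  have hconj : ∀ n : ℕ, (g ^ n)⁻¹ * (h * g ^ n) ∈
      {x : G | ∃ l : List G, (∀ y ∈ l, y ∈ T) ∧ l.length = C ∧ l.prod = x} := by
    intro n
    obtain ⟨l, hl, hlen, hprod⟩ := hword ((g ^ n)⁻¹ * (h * g ^ n))
    have hlC : l.length ≤ C := hlen ▸ hbd n
    refine ⟨l ++ List.replicate (C - l.length) 1, ?_, ?_, ?_⟩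
    · intro y hy
      rcases List.mem_append.mp hy with hy | hy
      · exact Set.mem_insert_of_mem _ (hl y hy)
      · rw [List.eq_of_mem_replicate hy]; exact Set.mem_insert _ _
    · simp [Nat.add_sub_cancel' hlC]
    · simp [hprod]
  -- two equal conjugates
  obtain ⟨m, -, n, -, hmn, hEq⟩ :=
    Set.infinite_univ.exists_ne_map_eq_of_mapsTo
      (f := fun n : ℕ => (g ^ n)⁻¹ * (h * g ^ n)) (fun n _ => hconj n) hAfin
  -- wlog m < n
  wlog hlt : m < n generalizing m n
  · exact this n m hmn.symm hEq.symm (by omega)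
  set k : ℕ := n - m with hk
  have hk0 : k ≠ 0 := by omega
  have hnm : n = m + k := by omega
  have hcomm : g ^ k * h = h * g ^ k := by
    have e : (g ^ m)⁻¹ * (h * g ^ m) = (g ^ m * g ^ k)⁻¹ * (h * (g ^ m * g ^ k)) := by
      rw [← pow_add, ← hnm]; exact hEq
    have e2 : h = (g ^ k)⁻¹ * h * g ^ k := by
      calc h = g ^ m * ((g ^ m)⁻¹ * (h * g ^ m)) * (g ^ m)⁻¹ := by group
      _ = g ^ m * ((g ^ m * g ^ k)⁻¹ * (h * (g ^ m * g ^ k))) * (g ^ m)⁻¹ := by rw [e]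
      _ = (g ^ k)⁻¹ * h * g ^ k := by group
    calc g ^ k * h = g ^ k * ((g ^ k)⁻¹ * h * g ^ k) := by rw [← e2]
    _ = h * g ^ k := by group
  -- g ^ k has infinite order
  have hgk : ¬ IsOfFinOrder (g ^ k) := fun hf => hg (hf.of_pow hk0)
  obtain ⟨z, hz⟩ := (hCIC (g ^ k) hgk).exists_generator
  have hgmem : g ∈ Subgroup.centralizer {g ^ k} := by
    rw [Subgroup.mem_centralizer_iff]
    rintro y ⟨rfl⟩
    exact (Commute.self_pow g k).symm
  have hhmem : h ∈ Subgroup.centralizer {g ^ k} := by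
    rw [Subgroup.mem_centralizer_iff]
    rintro y ⟨rfl⟩
    exact hcomm
  obtain ⟨a, ha⟩ := hz ⟨g, hgmem⟩
  obtain ⟨b, hb⟩ := hz ⟨h, hhmem⟩
  have hcomm2 : g * h = h * g := by
    have : (⟨g, hgmem⟩ : Subgroup.centralizer ({g ^ k} : Set G)) * ⟨h, hhmem⟩ =
        ⟨h, hhmem⟩ * ⟨g, hgmem⟩ := by
      rw [← ha, ← hb, ← zpow_add, ← zpow_add, add_comm]
    exact congrArg Subtype.val this
  have : h ∈ Subgroup.centralizer ({g} : Set G) := by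
    rw [Subgroup.mem_centralizer_iff]
    rintro y ⟨rfl⟩
    exact hcomm2
  rw [hprim, Subgroup.mem_zpowers_iff] at this
  obtain ⟨t, ht⟩ := this
  exact ⟨t, ht.symm⟩
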